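/- In the orthographic construction with Ê equal to all of Ê(Δ, ê_0)∖{ê_0}: the biased graph Ω_0(Ê(Δ, ê_0)∖{ê_0}) is a biased expansion of Δ, with projection sending each edge ê to the edge of Δ whose edge line contains ê. -/

import Mathlib

open scoped Classical

/-! ## Graphs with parallel links and half edges -/

/-- A multigraph: each edge has a finite set of endpoints
(one endpoint for a half edge, two endpoints for a link). -/
structure MGraph (N : Type*) (E : Type*) where
  ends : E → Finset N

namespace MGraph

variable {N E : Type*} (G : MGraph N E)

/-- A link has two distinct endpoints. -/
def IsLink (e : E) : Prop := (G.ends e).card = 2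

/-- A half edge has exactly one endpoint. -/
def IsHalfEdge (e : E) : Prop := (G.ends e).card = 1

/-- The set of nodes of a set of edges. -/
def nodeSet (S : Set E) : Set N := {v | ∃ e ∈ S, v ∈ G.ends e}

/-- The nodes of a finite set of edges. -/
noncomputable def nodesOf (S : Finset E) : Finset N := S.biUnion G.ends

/-- The degree of a node in a finite edge set. -/
noncomputable def degreeIn (S : Finset E) (v : N) : ℕ :=
  (S.filter (fun e => v ∈ G.ends e)).card

/-- Two nodes joined by an edge of `S`. -/
def adjIn (S : Set E) (u v : N) : Prop := ∃ e ∈ S, u ∈ G.ends e ∧ v ∈ G.ends e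

/-- Connectivity of nodes through edges of `S`. -/
def nodeConn (S : Set E) : N → N → Prop := Relation.ReflTransGen (G.adjIn S)

/-- The components of the spanning subgraph `(N, S)`, as sets of nodes. -/
def components (S : Set E) : Set (Set N) := {W | ∃ v : N, W = {u | G.nodeConn S u v}}

/-- The number of components of the spanning subgraph `(N, S)`. -/
noncomputable def numComponents (S : Set E) : ℕ := Nat.card ↥(G.components S)

/-- The components of the non-spanning subgraph `(N(S), S)`. -/
def componentsOn (S : Set E) : Set (Set N) :=
  {W | ∃ v ∈ G.nodeSet S, W = {u | G.nodeConn S u v}}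

/-- The edges of `S` whose endpoints all lie in a node set `W`. -/
def edgesIn (S : Set E) (W : Set N) : Set E := {e | e ∈ S ∧ ∀ v ∈ G.ends e, v ∈ W}

/-- An edge set is connected if any two of its edges are joined through
consecutively intersecting edges of the set. -/
def ConnEdges (S : Set E) : Prop :=
  ∀ e ∈ S, ∀ f ∈ S, Relation.ReflTransGen
    (fun a b => a ∈ S ∧ b ∈ S ∧ ∃ v : N, v ∈ G.ends a ∧ v ∈ G.ends b) e f

/-- A circle: the edge set of a connected subgraph in which every node has degree 2. -/
def IsCircle (C : Finset E) : Prop :=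
  C.Nonempty ∧ (∀ e ∈ C, G.IsLink e) ∧ G.ConnEdges ↑C ∧
    ∀ v ∈ G.nodesOf C, G.degreeIn C v = 2

/-- A (simple, open) path joining two distinct nodes `u` and `v`. -/
def IsPath (Q : Finset E) (u v : N) : Prop :=
  Q.Nonempty ∧ u ≠ v ∧ (∀ e ∈ Q, G.IsLink e) ∧ G.ConnEdges ↑Q ∧
    u ∈ G.nodesOf Q ∧ v ∈ G.nodesOf Q ∧
    G.degreeIn Q u = 1 ∧ G.degreeIn Q v = 1 ∧
    ∀ w ∈ G.nodesOf Q, w ≠ u → w ≠ v → G.degreeIn Q w = 2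

/-- A simple graph: all edges are links and no two edges have the same endpoints. -/
def IsSimple : Prop := (∀ e : E, G.IsLink e) ∧ Function.Injective G.ends

/-- The graph is connected. -/
def IsConnected : Prop := ∀ u v : N, G.nodeConn Set.univ u v

/-- Inseparable graph: connected, and for every partition of the edge set into two
nonempty parts the two parts share at least two nodes. -/
def IsInseparable : Prop :=
  G.IsConnected ∧ ∀ A B : Set E, A.Nonempty → B.Nonempty → Disjoint A B →
    A ∪ B = Set.univ → ∃ u v : N, u ≠ v ∧ u ∈ G.nodeSet A ∧ u ∈ G.nodeSet B ∧
      v ∈ G.nodeSet A ∧ v ∈ G.nodeSet B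

/-- A linear class of circles: every member is a circle and no theta subgraph (the
union of three pairwise internally disjoint paths with the same two endpoints)
contains exactly two members of the class. -/
def IsLinearClass (B : Set (Finset E)) : Prop :=
  (∀ C ∈ B, G.IsCircle C) ∧
  ∀ u v : N, ∀ P₁ P₂ P₃ : Finset E,
    G.IsPath P₁ u v → G.IsPath P₂ u v → G.IsPath P₃ u v →
    Disjoint P₁ P₂ → Disjoint P₁ P₃ → Disjoint P₂ P₃ →
    (↑(G.nodesOf P₁) ∩ ↑(G.nodesOf P₂) : Set N) = {u, v} →
    (↑(G.nodesOf P₁) ∩ ↑(G.nodesOf P₃) : Set N) = {u, v} →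
    (↑(G.nodesOf P₂) ∩ ↑(G.nodesOf P₃) : Set N) = {u, v} →
    P₁ ∪ P₂ ∈ B → P₁ ∪ P₃ ∈ B → P₂ ∪ P₃ ∈ B

/-- A balanced edge set with respect to a class `B` of balanced circles:
no half edges, and every circle inside it belongs to `B`. -/
def IsBalancedSet (B : Set (Finset E)) (S : Set E) : Prop :=
  (∀ e ∈ S, G.IsLink e) ∧ ∀ C : Finset E, ↑C ⊆ S → G.IsCircle C → C ∈ B

/-- The number of balanced components of the spanning subgraph `(N, S)`. -/
noncomputable def numBalComponents (B : Set (Finset E)) (S : Set E) : ℕ :=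
  Nat.card ↥{W : Set N | W ∈ G.components S ∧ G.IsBalancedSet B (G.edgesIn S W)}

/-- Frame matroid rank function: `rk S = #N - b(S)`. -/
noncomputable def frameRk [Fintype N] (B : Set (Finset E)) (S : Set E) : ℕ :=
  Fintype.card N - G.numBalComponents B S

/-- Graphic (cycle) matroid rank function: `rk S = #N - c(S)`. -/
noncomputable def graphicRk [Fintype N] (S : Set E) : ℕ :=
  Fintype.card N - G.numComponents S

/-- Graphic matroid rank of a finite edge set, computed inside its own node set
(valid also for infinite graphs): `rk S = #N(S) - c(N(S), S)`. -/
noncomputable def graphicRkOn (S : Finset E) : ℕ :=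
  (G.nodesOf S).card - Nat.card ↥(G.componentsOn ↑S)

/-- Extended lift matroid rank function on `E ⊕ Unit`, where `Sum.inr ()` is the
extra point `e₀`: `rk S = #N - c(S ∩ E)` if `S ⊆ E` is balanced, and
`#N - c(S ∩ E) + 1` if `S` is unbalanced or contains `e₀`. -/
noncomputable def liftRk [Fintype N] (B : Set (Finset E)) (S : Set (E ⊕ Unit)) : ℕ :=
  if G.IsBalancedSet B {e | Sum.inl e ∈ S} ∧ Sum.inr () ∉ S then
    Fintype.card N - G.numComponents {e | Sum.inl e ∈ S}
  else Fintype.card N - G.numComponents {e | Sum.inl e ∈ S} + 1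

/-- Closed sets of the frame matroid (via the rank function; the matroid is finitary). -/
def FrameClosed [Fintype N] (B : Set (Finset E)) (S : Set E) : Prop :=
  ∀ e : E, (∃ S₀ : Finset E, ↑S₀ ⊆ S ∧
    G.frameRk B ↑(insert e S₀) = G.frameRk B ↑S₀) → e ∈ S

/-- Closed sets of the extended lift matroid. -/
def LiftClosed [Fintype N] (B : Set (Finset E)) (S : Set (E ⊕ Unit)) : Prop :=
  ∀ x : E ⊕ Unit, (∃ S₀ : Finset (E ⊕ Unit), ↑S₀ ⊆ S ∧
    G.liftRk B ↑(insert x S₀) = G.liftRk B ↑S₀) → x ∈ S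

/-- The balance-closure of an edge set. -/
def bcl (B : Set (Finset E)) (S : Set E) : Set E :=
  S ∪ {e | ∃ C ∈ B, e ∈ C ∧ ↑C ⊆ S ∪ {e}}

/-- The subgraph of all links, as a graph on the same nodes. -/
def linkGraph : MGraph N {e : E // G.IsLink e} := ⟨fun e => G.ends e.val⟩

/-- Restriction of a class of circles to the subgraph of links. -/
def linkBal (B : Set (Finset E)) : Set (Finset {e : E // G.IsLink e}) :=
  {C | C.image Subtype.val ∈ B}

/-- The subgraph on a subset of the edges (spanning all nodes). -/
def sub (D : Set E) : MGraph N ↥D := ⟨fun f => G.ends f.val⟩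

end MGraph

/-- A graph together with a distinguished class of "balanced" circles.
(It is a biased graph when the class is a linear class.) -/
structure BiasedGraph (N E : Type*) extends MGraph N E where
  Bal : Set (Finset E)

/-- The complete graph on a node set `N`. -/
def completeMGraph (N : Type*) : MGraph N {q : Finset N // q.card = 2} := ⟨Subtype.val⟩

/-- A gain graph with gain group `Γ`: each edge is given by a source, a target
(equal for a half edge) and a gain in the direction from source to target. -/
structure GainGraph (N E : Type*) (Γ : Type*) [Group Γ] extends MGraph N E where
  src : E → N
  tgt : E → N
  gain : E → Γ
  ends_eq : ∀ e : E, ends e = {src e, tgt e}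

namespace GainGraph

variable {N E Γ : Type*} [Group Γ] (Φ : GainGraph N E Γ)

/-- The gain of an edge in the direction from `u` to `v`. -/
noncomputable def ogain (e : E) (u v : N) : Γ :=
  if Φ.src e = u ∧ Φ.tgt e = v then Φ.gain e else (Φ.gain e)⁻¹

/-- A balanced circle of a gain graph: a circle whose gain function is given by a
potential on the nodes (equivalently, the product of its gains along a cyclic
orientation is the identity). -/
def BalancedCircle (C : Finset E) : Prop :=
  Φ.toMGraph.IsCircle C ∧
    ∃ θ : N → Γ, ∀ e ∈ C, Φ.gain e = (θ (Φ.src e))⁻¹ * θ (Φ.tgt e)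

/-- The biased graph `⟨Φ⟩` of a gain graph. -/
def biasedGraph : BiasedGraph N E := { Φ.toMGraph with Bal := {C | Φ.BalancedCircle C} }

end GainGraph

/-- A biased expansion of a graph `Δ` along a projection `p`: `p` is surjective,
preserves endpoints, and every circle of `Δ` with a chosen lift of all but one of
its edges has a unique completion to a balanced circle. -/
def IsBiasedExpansion {N E E' : Type*} (G : MGraph N E) (B : Set (Finset E))
    (Δ : MGraph N E') (p : E → E') : Prop :=
  Function.Surjective p ∧ (∀ e : E, G.ends e = Δ.ends (p e)) ∧
  ∀ C : Finset E', Δ.IsCircle C → ∀ e₀ ∈ C, ∀ s : E' → E,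
    (∀ f ∈ C.erase e₀, p (s f) = f) →
    ∃! t : E, p t = e₀ ∧ (C.erase e₀).image s ∪ {t} ∈ B

/-! ## Axiomatic (synthetic) projective geometry -/

/-- An axiomatic projective geometry: a point set with a line through any two
points, unique when the points are distinct, every line having at least three
points, and satisfying the Veblen–Young axiom. -/
structure ProjGeom (P : Type*) where
  line : P → P → Set P
  line_self : ∀ p : P, line p p = {p}
  line_symm : ∀ p q : P, line p q = line q p
  left_mem_line : ∀ p q : P, p ∈ line p q
  right_mem_line : ∀ p q : P, q ∈ line p q
  line_unique : ∀ p q x y : P, p ≠ q → x ∈ line p q → y ∈ line p q → x ≠ y →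
    line x y = line p q
  exists_third : ∀ p q : P, p ≠ q → ∃ r ∈ line p q, r ≠ p ∧ r ≠ q
  veblen : ∀ p q r s x : P, p ≠ q → r ≠ s → p ≠ r → q ≠ s →
    x ∈ line p q → x ∈ line r s → ∃ y, y ∈ line p r ∧ y ∈ line q s

namespace ProjGeom

variable {P : Type*} (G : ProjGeom P)

/-- A flat (subspace): a line-closed set of points. -/
def IsFlat (t : Set P) : Prop := ∀ p ∈ t, ∀ q ∈ t, G.line p q ⊆ t

/-- The span of a point set: the smallest flat containing it. -/
def span (A : Set P) : Set P := ⋂₀ {t : Set P | G.IsFlat t ∧ A ⊆ t}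

/-- An independent point set: no point is in the span of the others. -/
def Indep (A : Set P) : Prop := ∀ a ∈ A, a ∉ G.span (A \ {a})

/-- The (matroid) rank of a point set: the largest cardinality of a finite
independent subset. -/
noncomputable def rank (A : Set P) : ℕ :=
  sSup {n : ℕ | ∃ B : Finset P, ↑B ⊆ A ∧ G.Indep ↑B ∧ B.card = n}

/-- A hyperplane: a maximal proper flat. -/
def IsHyperplane (h : Set P) : Prop :=
  G.IsFlat h ∧ h ≠ Set.univ ∧ ∀ t : Set P, G.IsFlat t → h ⊆ t → t = h ∨ t = Set.univ

/-- The codimension of a flat: the least number of hyperplanes intersecting in it. -/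
noncomputable def codim (t : Set P) : ℕ :=
  sInf {n : ℕ | ∃ H : Finset (Set P), H.card = n ∧ (∀ h ∈ H, G.IsHyperplane h) ∧
    ⋂₀ ↑H = t}

variable {N : Type*}

/-- A cross-flat with respect to an independent family `ν`: a flat containing
none of the points `ν v`. -/
def crossFlat (ν : N → P) (t : Set P) : Prop := G.IsFlat t ∧ ∀ v : N, ν v ∉ t

/-- The union of all edge lines of the independent family `ν`. -/
def edgeLineUnion (ν : N → P) : Set P :=
  ⋃ (v : N) (w : N) (_ : v ≠ w), G.line (ν v) (ν w)

/-! ### The Menelaean (point) construction for the frame matroid -/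

/-- The underlying graph of the Menelaean construction `Ω(N̂, Ehat)`: a point of `Ehat`
in `N̂` is a half edge, any other point is a link joining the ends of its edge line. -/
noncomputable def menGraph (ν : N → P) (Ehat : Set P)
    (hE : ∀ x ∈ Ehat, x ∉ Set.range ν →
      ∃ pr : N × N, pr.1 ≠ pr.2 ∧ x ∈ G.line (ν pr.1) (ν pr.2)) :
    MGraph N ↥Ehat where
  ends e :=
    if h : (e : P) ∈ Set.range ν then {(show ∃ v : N, ν v = ↑e from h).choose}
    else {(hE e e.2 h).choose.1, (hE e e.2 h).choose.2}

/-- The balanced circles of the Menelaean construction: circles whose point set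
lies in a cross-flat. -/
noncomputable def menBal (ν : N → P) (Ehat : Set P)
    (hE : ∀ x ∈ Ehat, x ∉ Set.range ν →
      ∃ pr : N × N, pr.1 ≠ pr.2 ∧ x ∈ G.line (ν pr.1) (ν pr.2)) :
    Set (Finset ↥Ehat) :=
  {C | (G.menGraph ν Ehat hE).IsCircle C ∧
    ∃ t : Set P, G.crossFlat ν t ∧ ∀ e ∈ C, (e : P) ∈ t}

/-! ### The Cevian (hyperplane) construction for the frame matroid -/

/-- A Cevian arrangement over the point basis `ν`, described by its associated
graph `Γ` and its apex function: a link `e` with endpoints `v, w` has its apex on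
the edge line `v̂ŵ`, off the basis; a half edge at `v` has apex `ν v`. -/
def IsCevian {E : Type*} (ν : N → P) (Γ : MGraph N E) (apex : E → P) : Prop :=
  ∀ e : E,
    (∃ v w : N, v ≠ w ∧ Γ.ends e = ({v, w} : Finset N) ∧
      apex e ∈ G.line (ν v) (ν w) ∧ apex e ∉ Set.range ν) ∨
    (∃ v : N, Γ.ends e = ({v} : Finset N) ∧ apex e = ν v)

/-- The apical hyperplane of an edge of a Cevian arrangement. -/
def cevHyp {E : Type*} (ν : N → P) (Γ : MGraph N E) (apex : E → P) (e : E) : Set P :=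
  if Γ.IsLink e then G.span ((ν '' {u : N | u ∉ Γ.ends e}) ∪ {apex e})
  else G.span (ν '' {u : N | u ∉ Γ.ends e})

/-- The rank function of a Cevian arrangement:
the codimension of the intersection of the corresponding apical hyperplanes. -/
noncomputable def cevRk {E : Type*} (ν : N → P) (Γ : MGraph N E) (apex : E → P)
    (S : Finset E) : ℕ :=
  G.codim (⋂ e ∈ S, G.cevHyp ν Γ apex e)

/-- The balanced circles of a Cevian arrangement:
circles of deficient hyperplane-intersection rank. -/
noncomputable def cevBal {E : Type*} (ν : N → P) (Γ : MGraph N E) (apex : E → P) :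
    Set (Finset E) :=
  {C | Γ.IsCircle C ∧ G.cevRk ν Γ apex C < C.card}

/-! ### The orthographic (point) construction for the lift matroid -/

/-- The projection of the orthographic construction: each point of `Ehat` lies on the
edge line `z'(f)e₀` of a unique edge `f` of `Δ`. -/
noncomputable def orthoProj {E' : Type*} (z' : E' → P) (e₀ : P) (Ehat : Set P)
    (hE : ∀ x ∈ Ehat, ∃ f : E', x ∈ G.line (z' f) e₀) : ↥Ehat → E' :=
  fun e => (hE e e.2).choose

/-- The underlying graph of the orthographic construction `Ω₀(Ehat)`. -/
noncomputable def orthoGraph {E' : Type*} (Δ : MGraph N E') (z' : E' → P) (e₀ : P)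
    (Ehat : Set P) (hE : ∀ x ∈ Ehat, ∃ f : E', x ∈ G.line (z' f) e₀) : MGraph N ↥Ehat :=
  ⟨fun e => Δ.ends (G.orthoProj z' e₀ Ehat hE e)⟩

/-- The balanced circles of the orthographic construction:
circles spanning a cross-flat (a flat not containing `e₀`). -/
noncomputable def orthoBal {E' : Type*} (Δ : MGraph N E') (z' : E' → P) (e₀ : P)
    (Ehat : Set P) (hE : ∀ x ∈ Ehat, ∃ f : E', x ∈ G.line (z' f) e₀) : Set (Finset ↥Ehat) :=
  {C | (G.orthoGraph Δ z' e₀ Ehat hE).IsCircle C ∧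
    e₀ ∉ G.span (Subtype.val '' (↑C : Set ↥Ehat))}

end ProjGeom

/-! ### Synthetic affinographic arrangements -/

/-- A synthetic affinographic arrangement of hyperplanes in the affine geometry
obtained from the projective geometry `G` by deleting the ideal hyperplane `hinf`:
a family of hyperplanes `hP e` (given by their projective completions, with affine
parts `hP e \ hinf`), with parallel classes indexed by the edges of a graph `Δ` with
links only via the surjection `π`; hyperplanes in the class of `f` have common
ideal part `ideal f`, and the matroid of the ideal parts (rank = codimension inside
`hinf`) is the graphic matroid of `Δ`. -/
def IsAffinographic {P N E E' : Type*} [Fintype N] (G : ProjGeom P) (hinf : Set P)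
    (hP : E → Set P) (Δ : MGraph N E') (π : E → E') (ideal : E' → Set P) : Prop :=
  G.IsHyperplane hinf ∧ (∀ f : E', Δ.IsLink f) ∧ Function.Surjective π ∧
  Function.Injective hP ∧ Function.Injective ideal ∧
  (∀ e : E, G.IsHyperplane (hP e) ∧ hP e ≠ hinf ∧ hP e ∩ hinf = ideal (π e)) ∧
  ∀ S : Finset E', Δ.graphicRk (↑S : Set E') = G.codim (hinf ∩ ⋂ f ∈ S, ideal f) - 1

/-- The underlying graph of the biased graph `Ω(A)` of an affinographic
arrangement: each edge of `Δ` is replaced by the edges of its parallel class. -/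
def affinoGraph {N E E' : Type*} (Δ : MGraph N E') (π : E → E') : MGraph N E :=
  ⟨fun e => Δ.ends (π e)⟩

/-- The affine intersection `t_A(S)` of the hyperplanes of `S`. -/
def affInter {P E : Type*} (hinf : Set P) (hP : E → Set P) (S : Set E) : Set P :=
  ⋂ e ∈ S, (hP e \ hinf)

/-- The balanced circles of `Ω(A)`: digons over a single edge of `Δ` are unbalanced;
any other circle is balanced iff its affine intersection is nonempty. -/
def affinoBal {P N E E' : Type*} (_G : ProjGeom P) (hinf : Set P) (hP : E → Set P)
    (Δ : MGraph N E') (π : E → E') : Set (Finset E) :=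
  {C | (affinoGraph Δ π).IsCircle C ∧ ¬(∃ f : E', ∀ e ∈ C, π e = f) ∧
    (affInter hinf hP ↑C).Nonempty}

/-! ### Coordinatized projective spaces -/

/-- The rank of a finite set of points of a coordinatized projective space:
the dimension of the linear span of representative vectors. -/
noncomputable def projRank (F : Type*) {V : Type*} [DivisionRing F] [AddCommGroup V]
    [Module F V] (A : Finset (Projectivization F V)) : ℕ :=
  Module.finrank F ↥(Submodule.span F (Projectivization.rep '' (↑A : Set (Projectivization F V))))

/-- The edge set of the full biased graph `Ω^•`: the edges of `Ω` together with a
new half edge at every node not already supporting one. -/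
def FullE {N E : Type*} (Ω : BiasedGraph N E) : Type _ :=
  E ⊕ {v : N // ∀ e : E, Ω.ends e ≠ ({v} : Finset N)}

/-- The underlying graph of the full biased graph `Ω^•`. -/
def fullGraph {N E : Type*} (Ω : BiasedGraph N E) : MGraph N (FullE Ω) :=
  ⟨Sum.elim Ω.ends (fun v => {v.val})⟩

/-- The balanced circles of the full biased graph `Ω^•` (circles avoid half edges). -/
def fullBal {N E : Type*} (Ω : BiasedGraph N E) : Set (Finset (FullE Ω)) :=
  {C | ∃ C₀ ∈ Ω.Bal, C = C₀.image Sum.inl}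

namespace ProjGeom

variable {P : Type*} (G : ProjGeom P)

lemma isFlat_univ : G.IsFlat (Set.univ : Set P) := fun _ _ _ _ _ _ => trivial

lemma isFlat_span (A : Set P) : G.IsFlat (G.span A) := by
  intro p hp q hq x hx
  refine Set.mem_sInter.mpr fun t ht => ?_
  exact ht.1 p (Set.mem_sInter.mp hp t ht) q (Set.mem_sInter.mp hq t ht) hx

lemma subset_span (A : Set P) : A ⊆ G.span A :=
  fun _ ha => Set.mem_sInter.mpr fun _ ht => ht.2 ha

lemma span_le {A t : Set P} (ht : G.IsFlat t) (h : A ⊆ t) : G.span A ⊆ t :=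
  Set.sInter_subset_of_mem ⟨ht, h⟩

lemma span_mono {A B : Set P} (h : A ⊆ B) : G.span A ⊆ G.span B :=
  G.span_le (G.isFlat_span B) (h.trans (G.subset_span B))

lemma line_subset_span {A : Set P} {a b : P} (ha : a ∈ G.span A) (hb : b ∈ G.span A) :
    G.line a b ⊆ G.span A := G.isFlat_span A a ha b hb

/-- The key flat: a flat `F` together with all lines from `F` to an outside point `q`. -/
lemma isFlat_insert_lines {F : Set P} (hF : G.IsFlat F) {q : P} (hq : q ∉ F) :
    G.IsFlat (insert q {x | ∃ a ∈ F, x ∈ G.line a q}) := by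
  set U := insert q {x | ∃ a ∈ F, x ∈ G.line a q} with hU
  have hqU : q ∈ U := Set.mem_insert _ _
  have hFU : ∀ a ∈ F, ∀ x ∈ G.line a q, x ∈ U := fun a ha x hx =>
    Set.mem_insert_iff.mpr (Or.inr ⟨a, ha, hx⟩)
  have hqF : ∀ a ∈ F, a ≠ q := fun a ha h => hq (h ▸ ha)
  -- main case: both points off q
  have key : ∀ x y z : P, x ∈ U → y ∈ U → x ≠ q → y ≠ q → z ∈ G.line x y → z ∈ U := by
    intro x y z hx hy hxq hyq hz
    obtain ⟨a, ha, hxa⟩ : ∃ a ∈ F, x ∈ G.line a q := (Set.mem_insert_iff.mp hx).resolve_left hxq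
    obtain ⟨b, hb, hyb⟩ : ∃ b ∈ F, y ∈ G.line b q := (Set.mem_insert_iff.mp hy).resolve_left hyq
    have haq : a ≠ q := hqF a ha
    have hbq : b ≠ q := hqF b hb
    by_cases hxy : x = y
    · subst hxy
      rw [G.line_self x] at hz
      exact hz ▸ hx
    by_cases hab : a = b
    · subst hab
      have : G.line x y = G.line a q := G.line_unique a q x y haq hxa hyb hxy
      exact hFU a ha z (this ▸ hz)
    by_cases hzq : z = q
    · exact hzq ▸ hqU
    by_cases hzx : z = x
    · exact hzx ▸ hx
    by_cases hzy : z = y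
    · exact hzy ▸ hy
    by_cases hya : y = a
    · have hyaq : y ∈ G.line a q := by rw [hya]; exact G.left_mem_line a q
      have h1 : G.line x y = G.line a q := G.line_unique a q x y haq hxa hyaq hxy
      exact hFU a ha z (h1 ▸ hz)
    -- Veblen 1: x ∈ line z y ∩ line q a  ⟹  ∃ w ∈ line z q ∩ line y a
    have hxzy : x ∈ G.line z y := by
      have : G.line z y = G.line x y :=
        G.line_unique x y z y hxy hz (G.right_mem_line x y) hzy
      exact this ▸ G.left_mem_line x y
    have hxqa : x ∈ G.line q a := (G.line_symm a q) ▸ hxa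
    obtain ⟨w, hw1, hw2⟩ := G.veblen z y q a x hzy haq.symm hzq hya hxzy hxqa
    -- w ∈ line z q, w ∈ line y a
    by_cases hwq : w = q
    · -- contradiction: q ∈ line y a forces q ∈ F
      exfalso
      have hqya : q ∈ G.line y a := hwq ▸ hw2
      have h1 : G.line q a = G.line y a :=
        G.line_unique y a q a hya hqya (G.right_mem_line y a) haq.symm
      have hy_qa : y ∈ G.line q a := by rw [h1]; exact G.left_mem_line y a
      have h2 : G.line y q = G.line q a :=
        G.line_unique q a y q haq.symm hy_qa (G.left_mem_line q a) hyq
      have h3 : G.line y q = G.line b q :=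
        G.line_unique b q y q hbq hyb (G.right_mem_line b q) hyq
      have h4 : a ∈ G.line b q := by
        rw [← h3, h2]; exact G.right_mem_line q a
      have h5 : G.line a b = G.line b q :=
        G.line_unique b q a b hbq h4 (G.left_mem_line b q) hab
      exact hq (hF a ha b hb (by rw [h5]; exact G.right_mem_line b q))
    by_cases hwa : w = a
    · have haz : a ∈ G.line z q := hwa ▸ hw1
      have h1 : G.line a q = G.line z q :=
        G.line_unique z q a q hzq haz (G.right_mem_line z q) haq
      exact hFU a ha z (by rw [h1]; exact G.left_mem_line z q)
    -- Veblen 2: y ∈ line w a ∩ line q b  ⟹  ∃ u ∈ line w q ∩ line a b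
    have hyw : y ∈ G.line w a := by
      have : G.line w a = G.line y a :=
        G.line_unique y a w a hya hw2 (G.right_mem_line y a) hwa
      exact this ▸ G.left_mem_line y a
    have hyqb : y ∈ G.line q b := (G.line_symm b q) ▸ hyb
    obtain ⟨u, hu1, hu2⟩ := G.veblen w a q b y hwa hbq.symm hwq hab hyw hyqb
    have huF : u ∈ F := hF a ha b hb hu2
    have huq : u ≠ q := fun h => hq (h ▸ huF)
    -- u ∈ line w q = line z q, so z ∈ line u q
    have h1 : G.line w q = G.line z q :=
      G.line_unique z q w q hzq hw1 (G.right_mem_line z q) hwq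
    have huz : u ∈ G.line z q := h1 ▸ hu1
    have h2 : G.line u q = G.line z q :=
      G.line_unique z q u q hzq huz (G.right_mem_line z q) huq
    exact hFU u huF z (by rw [h2]; exact G.left_mem_line z q)
  intro x hx y hy
  by_cases hxq : x = q
  · by_cases hyq : y = q
    · intro z hz
      rw [hxq, hyq, G.line_self] at hz
      exact hz ▸ hqU
    · obtain ⟨b, hb, hyb⟩ : ∃ b ∈ F, y ∈ G.line b q := (Set.mem_insert_iff.mp hy).resolve_left hyq
      have hxbq : x ∈ G.line b q := by rw [hxq]; exact G.right_mem_line b q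
      have h1 : G.line x y = G.line b q :=
        G.line_unique b q x y (hqF b hb) hxbq hyb (fun h => hyq (h ▸ hxq))
      intro z hz
      exact hFU b hb z (h1 ▸ hz)
  · by_cases hyq : y = q
    · obtain ⟨a, ha, hxa⟩ : ∃ a ∈ F, x ∈ G.line a q := (Set.mem_insert_iff.mp hx).resolve_left hxq
      have hybq : y ∈ G.line a q := by rw [hyq]; exact G.right_mem_line a q
      have h1 : G.line x y = G.line a q :=
        G.line_unique a q x y (hqF a ha) hxa hybq (fun h => hxq (h.symm ▸ hyq))
      intro z hz
      exact hFU a ha z (h1 ▸ hz)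
    · intro z hz
      exact key x y z hx hy hxq hyq hz


lemma span_insert_eq {A : Set P} {q : P} (hq : q ∉ G.span A) :
    G.span (insert q A) = insert q {x | ∃ a ∈ G.span A, x ∈ G.line a q} := by
  apply subset_antisymm
  · refine G.span_le (G.isFlat_insert_lines (G.isFlat_span A) hq) ?_
    intro x hx
    rcases Set.mem_insert_iff.mp hx with rfl | hxA
    · exact Set.mem_insert _ _
    · exact Set.mem_insert_iff.mpr
        (Or.inr ⟨x, G.subset_span A hxA, G.left_mem_line x q⟩)
  · intro x hx
    rcases Set.mem_insert_iff.mp hx with rfl | ⟨a, ha, hline⟩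
    · exact G.subset_span _ (Set.mem_insert _ _)
    · have haI : a ∈ G.span (insert q A) := G.span_mono (Set.subset_insert q A) ha
      have hqI : q ∈ G.span (insert q A) := G.subset_span _ (Set.mem_insert _ _)
      exact G.line_subset_span haI hqI hline

lemma exchange {A : Set P} {p q : P} (hq : q ∉ G.span A)
    (hp : p ∈ G.span (insert q A)) (hpA : p ∉ G.span A) :
    q ∈ G.span (insert p A) := by
  rw [G.span_insert_eq hq] at hp
  rcases Set.mem_insert_iff.mp hp with rfl | ⟨a, ha, hline⟩
  · exact G.subset_span _ (Set.mem_insert _ _)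
  · have hpa : p ≠ a := fun h => hpA (h ▸ ha)
    have haq : a ≠ q := fun h => hq (h ▸ ha)
    have h1 : G.line a p = G.line a q :=
      G.line_unique a q a p haq (G.left_mem_line a q) hline hpa.symm
    have hq' : q ∈ G.line a p := by rw [h1]; exact G.right_mem_line a q
    have haI : a ∈ G.span (insert p A) := G.span_mono (Set.subset_insert p A) ha
    have hpI : p ∈ G.span (insert p A) := G.subset_span _ (Set.mem_insert _ _)
    exact G.line_subset_span haI hpI hq'

lemma indep_mono {A B : Set P} (h : B ⊆ A) (hA : G.Indep A) : G.Indep B :=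
  fun a ha hsp => hA a (h ha) (G.span_mono (Set.diff_subset_diff_left h) hsp)

lemma indep_insert {A : Set P} {q : P} (hA : G.Indep A) (hq : q ∉ G.span A) :
    G.Indep (insert q A) := by
  have hqA : q ∉ A := fun h => hq (G.subset_span _ h)
  intro a ha hsp
  rcases Set.mem_insert_iff.mp ha with rfl | haA
  · have : insert a A \ {a} = A := by
      rw [Set.insert_diff_of_mem _ (Set.mem_singleton a), Set.diff_singleton_eq_self hqA]
    rw [this] at hsp
    exact hq hsp
  · have haq : a ≠ q := fun h => hqA (h ▸ haA)
    have h1 : insert q A \ {a} = insert q (A \ {a}) := by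
      ext x
      simp only [Set.mem_insert_iff, Set.mem_diff, Set.mem_singleton_iff]
      constructor
      · rintro ⟨rfl | hxA, hxa⟩
        · exact Or.inl rfl
        · exact Or.inr ⟨hxA, hxa⟩
      · rintro (rfl | ⟨hxA, hxa⟩)
        · exact ⟨Or.inl rfl, haq.symm⟩
        · exact ⟨Or.inr hxA, hxa⟩
    rw [h1] at hsp
    by_cases h2 : a ∈ G.span (A \ {a})
    · exact hA a haA h2
    · have h3 : q ∉ G.span (A \ {a}) := fun h => hq (G.span_mono Set.diff_subset h)
      have h4 := G.exchange h3 hsp h2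
      rw [Set.insert_diff_singleton, Set.insert_eq_self.mpr haA] at h4
      exact hq h4

lemma indep_of_rank_eq_card {A : Finset P} (h : G.rank ↑A = A.card) : G.Indep (↑A : Set P) := by
  have hmem : sSup {n : ℕ | ∃ B : Finset P, ↑B ⊆ (↑A : Set P) ∧ G.Indep ↑B ∧ B.card = n}
      ∈ {n : ℕ | ∃ B : Finset P, ↑B ⊆ (↑A : Set P) ∧ G.Indep ↑B ∧ B.card = n} := by
    apply Nat.sSup_mem
    · exact ⟨0, ∅, by simp, fun a ha => absurd ha (by simp), rfl⟩
    · refine ⟨A.card, fun n hn => ?_⟩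
      obtain ⟨B, hBA, _, rfl⟩ := hn
      exact Finset.card_le_card (Finset.coe_subset.mp hBA)
  rw [show sSup {n : ℕ | ∃ B : Finset P, ↑B ⊆ (↑A : Set P) ∧ G.Indep ↑B ∧ B.card = n}
      = G.rank ↑A from rfl, h] at hmem
  obtain ⟨B, hBA, hBind, hBcard⟩ := hmem
  have : B = A := Finset.eq_of_subset_of_card_le (Finset.coe_subset.mp hBA) (le_of_eq hBcard.symm)
  exact this ▸ hBind

lemma rank_lt_card_dep {A : Finset P} (h : G.rank ↑A < A.card) :
    ∃ a ∈ A, a ∈ G.span ((↑A : Set P) \ {a}) := by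
  by_contra hcon
  push_neg at hcon
  have hind : G.Indep (↑A : Set P) := fun a ha => hcon a (by exact_mod_cast ha)
  have : A.card ∈ {n : ℕ | ∃ B : Finset P, ↑B ⊆ (↑A : Set P) ∧ G.Indep ↑B ∧ B.card = n} :=
    ⟨A, subset_rfl, hind, rfl⟩
  have hb : BddAbove {n : ℕ | ∃ B : Finset P, ↑B ⊆ (↑A : Set P) ∧ G.Indep ↑B ∧ B.card = n} := by
    refine ⟨A.card, fun n hn => ?_⟩
    obtain ⟨B, hBA, _, rfl⟩ := hn
    exact Finset.card_le_card (Finset.coe_subset.mp hBA)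
  exact absurd (le_csSup hb this) (not_le.mpr h)


end ProjGeom

namespace MGraph

variable {N E : Type*} (G : MGraph N E)

lemma adjIn_symm' {S : Set E} {u v : N} (h : G.adjIn S u v) : G.adjIn S v u := by
  obtain ⟨e, he, hu, hv⟩ := h; exact ⟨e, he, hv, hu⟩

lemma nodeConn_symm {S : Set E} {u v : N} (h : G.nodeConn S u v) : G.nodeConn S v u :=
  (@Relation.ReflTransGen.stdSymm _ _ ⟨fun _ _ h => G.adjIn_symm' h⟩).symm _ _ h

lemma classEq {S : Set E} {u v : N} (h : G.nodeConn S u v) :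
    {w | G.nodeConn S w u} = {w | G.nodeConn S w v} := by
  ext w
  exact ⟨fun hw => Relation.ReflTransGen.trans hw h,
    fun hw => Relation.ReflTransGen.trans hw (G.nodeConn_symm h)⟩

lemma mem_nodeSet_of_conn {S : Set E} {u v : N} (h : G.nodeConn S u v) (hne : u ≠ v) :
    v ∈ G.nodeSet S := by
  induction h using Relation.ReflTransGen.head_induction_on with
  | refl => exact absurd rfl hne
  | head hadj hrtg ih =>
      rename_i x c
      by_cases hcv : c = v
      · obtain ⟨e, heS, hxe, hce⟩ := hadj
        exact ⟨e, heS, hcv ▸ hce⟩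
      · exact ih hcv

lemma mem_nodesOf {C : Finset E} {v : N} : v ∈ G.nodesOf C ↔ ∃ e ∈ C, v ∈ G.ends e := by
  simp [nodesOf]

lemma nodeSet_coe (C : Finset E) : G.nodeSet ↑C = ↑(G.nodesOf C) := by
  ext v; simp [nodeSet, nodesOf]

lemma conn_of_edge_chain {S : Set E} {e g : E} (he : e ∈ S)
    (h : Relation.ReflTransGen
      (fun a b => a ∈ S ∧ b ∈ S ∧ ∃ v : N, v ∈ G.ends a ∧ v ∈ G.ends b) e g) :
    ∀ u ∈ G.ends e, ∀ v ∈ G.ends g, G.nodeConn S u v := by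
  induction h with
  | refl => exact fun u hu v hv => Relation.ReflTransGen.single ⟨e, he, hu, hv⟩
  | tail hchain hstep ih =>
      intro u hu v hv
      obtain ⟨hfS, hgS, w, hwf, hwg⟩ := hstep
      exact Relation.ReflTransGen.trans (ih u hu w hwf)
        (Relation.ReflTransGen.single ⟨_, hgS, hwg, hv⟩)

lemma circle_conn_char {C : Finset E} (hC : G.IsCircle C) (u v : N) :
    G.nodeConn ↑C u v ↔ u = v ∨ (u ∈ G.nodesOf C ∧ v ∈ G.nodesOf C) := by
  constructor
  · intro h
    by_cases huv : u = v
    · exact Or.inl huv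
    · refine Or.inr ⟨?_, ?_⟩
      · have := G.mem_nodeSet_of_conn (G.nodeConn_symm h) (Ne.symm huv)
        rw [G.nodeSet_coe] at this; exact_mod_cast this
      · have := G.mem_nodeSet_of_conn h huv
        rw [G.nodeSet_coe] at this; exact_mod_cast this
  · rintro (rfl | ⟨hu, hv⟩)
    · exact Relation.ReflTransGen.refl
    · obtain ⟨e, heC, hue⟩ := G.mem_nodesOf.mp hu
      obtain ⟨g, hgC, hvg⟩ := G.mem_nodesOf.mp hv
      exact G.conn_of_edge_chain (Finset.mem_coe.mpr heC)
        (hC.2.2.1 e (Finset.mem_coe.mpr heC) g (Finset.mem_coe.mpr hgC)) u hue v hvg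

lemma sum_degree_eq (C : Finset E) (V : Finset N) :
    ∑ v ∈ V, G.degreeIn C v = ∑ e ∈ C, ((G.ends e).filter (fun v => v ∈ V)).card := by
  have h1 : ∀ e : E, ((G.ends e).filter (fun v => v ∈ V)).card
      = ∑ v ∈ V, if v ∈ G.ends e then 1 else 0 := by
    intro e
    have : (G.ends e).filter (fun v => v ∈ V) = V.filter (fun v => v ∈ G.ends e) := by
      ext x; simp [Finset.mem_filter, and_comm]
    rw [this, Finset.card_filter]
  rw [Finset.sum_congr rfl (fun e _ => h1 e), Finset.sum_comm]
  refine Finset.sum_congr rfl fun v _ => ?_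
  rw [degreeIn, Finset.card_filter]

lemma circle_nodes_card {C : Finset E} (hC : G.IsCircle C) : (G.nodesOf C).card = C.card := by
  have h1 := G.sum_degree_eq C (G.nodesOf C)
  have h2 : ∑ v ∈ G.nodesOf C, G.degreeIn C v = 2 * (G.nodesOf C).card := by
    rw [Finset.sum_congr rfl (fun v hv => hC.2.2.2 v hv), Finset.sum_const, smul_eq_mul,
      mul_comm]
  have h3 : ∑ e ∈ C, ((G.ends e).filter (fun v => v ∈ G.nodesOf C)).card = 2 * C.card := by
    rw [Finset.sum_congr rfl (fun e he => ?_), Finset.sum_const, smul_eq_mul, mul_comm]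
    have hsub : (G.ends e).filter (fun v => v ∈ G.nodesOf C) = G.ends e := by
      refine Finset.filter_true_of_mem fun x hx => G.mem_nodesOf.mpr ⟨e, he, hx⟩
    rw [hsub, hC.2.1 e he]
  omega

lemma circle_erase_conn {C : Finset E} (hC : G.IsCircle C) {f₀ : E} (hf₀ : f₀ ∈ C)
    {a b : N} (ha : a ∈ G.ends f₀) (hb : b ∈ G.ends f₀) :
    G.nodeConn ↑(C.erase f₀) a b := by
  by_cases hab : a = b
  · exact hab ▸ Relation.ReflTransGen.refl
  by_contra hcon
  set D := C.erase f₀ with hD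
  set V := (G.nodesOf C).filter (fun v => G.nodeConn ↑D v a) with hV
  have haC : a ∈ G.nodesOf C := G.mem_nodesOf.mpr ⟨f₀, hf₀, ha⟩
  have haV : a ∈ V := Finset.mem_filter.mpr ⟨haC, Relation.ReflTransGen.refl⟩
  have hbV : b ∉ V := fun h => hcon (G.nodeConn_symm (Finset.mem_filter.mp h).2)
  have heven : ∀ e ∈ D, Even ((G.ends e).filter (fun v => v ∈ V)).card := by
    intro e heD
    by_cases hex : ∃ x ∈ G.ends e, x ∈ V
    · obtain ⟨x, hxe, hxV⟩ := hex
      have hall : (G.ends e).filter (fun v => v ∈ V) = G.ends e := by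
        refine Finset.filter_true_of_mem fun y hye => ?_
        have hconn : G.nodeConn ↑D y a :=
          Relation.ReflTransGen.trans
            (Relation.ReflTransGen.single ⟨e, Finset.mem_coe.mpr heD, hye, hxe⟩)
            (Finset.mem_filter.mp hxV).2
        exact Finset.mem_filter.mpr
          ⟨G.mem_nodesOf.mpr ⟨e, Finset.mem_of_mem_erase heD, hye⟩, hconn⟩
      rw [hall, hC.2.1 e (Finset.mem_of_mem_erase heD)]
      exact even_two
    · push_neg at hex
      have : (G.ends e).filter (fun v => v ∈ V) = ∅ := Finset.filter_eq_empty_iff.mpr hex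
      rw [this]; simp
  have hf₀ends : G.ends f₀ = {a, b} := by
    have h2 : (G.ends f₀).card = 2 := hC.2.1 f₀ hf₀
    have hsub : ({a, b} : Finset N) ⊆ G.ends f₀ := by
      intro x hx
      rcases Finset.mem_insert.mp hx with rfl | hx
      · exact ha
      · exact (Finset.mem_singleton.mp hx) ▸ hb
    refine (Finset.eq_of_subset_of_card_le hsub ?_).symm
    rw [h2, Finset.card_insert_of_notMem (by simpa using hab), Finset.card_singleton]
  have hodd : ((G.ends f₀).filter (fun v => v ∈ V)).card = 1 := by
    have : (G.ends f₀).filter (fun v => v ∈ V) = {a} := by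
      rw [hf₀ends]
      ext x
      simp only [Finset.mem_filter, Finset.mem_insert, Finset.mem_singleton]
      constructor
      · rintro ⟨rfl | rfl, hxV⟩
        · rfl
        · exact absurd hxV hbV
      · rintro rfl
        exact ⟨Or.inl rfl, haV⟩
    rw [this, Finset.card_singleton]
  have hsum1 : ∑ v ∈ V, G.degreeIn C v = 2 * V.card := by
    rw [Finset.sum_congr rfl
      (fun v hv => hC.2.2.2 v (Finset.mem_filter.mp hv).1), Finset.sum_const, smul_eq_mul,
      mul_comm]
  have hsum2 := G.sum_degree_eq C V
  have hsplit : ∑ e ∈ C, ((G.ends e).filter (fun v => v ∈ V)).card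
      = ((G.ends f₀).filter (fun v => v ∈ V)).card
        + ∑ e ∈ D, ((G.ends e).filter (fun v => v ∈ V)).card :=
    (Finset.add_sum_erase C _ hf₀).symm
  obtain ⟨k, hk⟩ := Finset.even_sum (f := fun e => ((G.ends e).filter (fun v => v ∈ V)).card)
    (s := D) heven
  omega

lemma conn_erase_char {C : Finset E} (hC : G.IsCircle C) {f₀ : E} (hf₀ : f₀ ∈ C) (u v : N) :
    G.nodeConn ↑(C.erase f₀) u v ↔ u = v ∨ (u ∈ G.nodesOf C ∧ v ∈ G.nodesOf C) := by
  constructor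
  · intro h
    by_cases huv : u = v
    · exact Or.inl huv
    · refine Or.inr ⟨?_, ?_⟩
      · have := G.mem_nodeSet_of_conn (G.nodeConn_symm h) (Ne.symm huv)
        obtain ⟨e, heD, hue⟩ := this
        exact G.mem_nodesOf.mpr ⟨e, Finset.mem_of_mem_erase (Finset.mem_coe.mp heD), hue⟩
      · have := G.mem_nodeSet_of_conn h huv
        obtain ⟨e, heD, hve⟩ := this
        exact G.mem_nodesOf.mpr ⟨e, Finset.mem_of_mem_erase (Finset.mem_coe.mp heD), hve⟩
  · rintro (rfl | ⟨hu, hv⟩)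
    · exact Relation.ReflTransGen.refl
    · have hCconn : G.nodeConn ↑C u v := (G.circle_conn_char hC u v).mpr (Or.inr ⟨hu, hv⟩)
      clear hv
      induction hCconn with
      | refl => exact Relation.ReflTransGen.refl
      | tail hchain hstep ih =>
          obtain ⟨e, heC, hxe, hye⟩ := hstep
          have ihb := ih
          by_cases hef : e = f₀
          · exact Relation.ReflTransGen.trans ihb
              (G.circle_erase_conn hC hf₀ (hef ▸ hxe) (hef ▸ hye))
          · exact Relation.ReflTransGen.trans ihb
              (Relation.ReflTransGen.single
                ⟨e, Finset.mem_coe.mpr (Finset.mem_erase.mpr ⟨hef, Finset.mem_coe.mp heC⟩),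
                  hxe, hye⟩)

lemma numComponents_char [Fintype N] (S : Set E) (M : Finset N) (hM : M.Nonempty)
    (hchar : ∀ u v : N, G.nodeConn S u v ↔ (u = v ∨ (u ∈ M ∧ v ∈ M))) :
    G.numComponents S = Fintype.card N - M.card + 1 := by
  classical
  obtain ⟨m₀, hm₀⟩ := hM
  have conn_mm : ∀ v ∈ M, G.nodeConn S v m₀ := fun v hv => (hchar v m₀).mpr (Or.inr ⟨hv, hm₀⟩)
  have hmemcomp : ∀ v : N, {u | G.nodeConn S u v} ∈ G.components S := fun v => ⟨v, rfl⟩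
  set g : Option {v : N // v ∉ M} → ↥(G.components S) :=
    fun o => ⟨{u | G.nodeConn S u (o.elim m₀ Subtype.val)}, hmemcomp _⟩ with hg
  have hbij : Function.Bijective g := by
    constructor
    · intro o₁ o₂ h
      have h' : {u | G.nodeConn S u (o₁.elim m₀ Subtype.val)}
          = {u | G.nodeConn S u (o₂.elim m₀ Subtype.val)} := congrArg Subtype.val h
      have hc : G.nodeConn S (o₁.elim m₀ Subtype.val) (o₂.elim m₀ Subtype.val) := by
        have hx : (o₁.elim m₀ Subtype.val)
            ∈ {u | G.nodeConn S u (o₁.elim m₀ Subtype.val)} := Relation.ReflTransGen.refl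
        rw [h'] at hx; exact hx
      rcases (hchar _ _).mp hc with heq | ⟨h1, h2⟩
      · match o₁, o₂ with
        | none, none => rfl
        | none, some ⟨v, hv⟩ =>
            simp only [Option.elim] at heq
            exact absurd (heq ▸ hm₀) hv
        | some ⟨v, hv⟩, none =>
            simp only [Option.elim] at heq
            exact absurd (heq.symm ▸ hm₀) hv
        | some ⟨v, hv⟩, some ⟨w, hw⟩ => simp only [Option.elim] at heq; subst heq; rfl
      · match o₁, o₂ with
        | none, none => rfl
        | none, some ⟨v, hv⟩ => exact absurd h2 hv
        | some ⟨v, hv⟩, none => exact absurd h1 hv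
        | some ⟨v, hv⟩, some ⟨w, hw⟩ => exact absurd h1 hv
    · rintro ⟨W, v, rfl⟩
      by_cases hv : v ∈ M
      · exact ⟨none, Subtype.ext (G.classEq (G.nodeConn_symm (conn_mm v hv)))⟩
      · exact ⟨some ⟨v, hv⟩, rfl⟩
  have hcount : G.numComponents S = Nat.card (Option {v : N // v ∉ M}) := by
    rw [numComponents, ← Nat.card_eq_of_bijective g hbij]
  rw [hcount, Nat.card_eq_fintype_card, Fintype.card_option]
  congr 1
  rw [Fintype.card_subtype_compl, Fintype.card_coe]

lemma isCircle_map {E₂ : Type*} (G₂ : MGraph N E₂)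
    {C : Finset E} (σ : E → E₂) (hinj : Set.InjOn σ ↑C)
    (hends : ∀ e ∈ C, G₂.ends (σ e) = G.ends e) (hC : G.IsCircle C) :
    G₂.IsCircle (C.image σ) := by
  classical
  obtain ⟨hne, hlink, hconn, hdeg⟩ := hC
  refine ⟨hne.image σ, ?_, ?_, ?_⟩
  · intro e' he'
    obtain ⟨e, heC, rfl⟩ := Finset.mem_image.mp he'
    rw [IsLink, hends e heC]
    exact hlink e heC
  · intro a' ha' b' hb'
    obtain ⟨a, haC, rfl⟩ := Finset.mem_image.mp (Finset.mem_coe.mp ha')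
    obtain ⟨b, hbC, rfl⟩ := Finset.mem_image.mp (Finset.mem_coe.mp hb')
    refine Relation.ReflTransGen.lift σ ?_ _ _ (hconn a (Finset.mem_coe.mpr haC) b (Finset.mem_coe.mpr hbC))
    rintro x y ⟨hxC, hyC, w, hwx, hwy⟩
    refine ⟨?_, ?_, w, ?_, ?_⟩
    · exact Finset.mem_coe.mpr (Finset.mem_image_of_mem σ (Finset.mem_coe.mp hxC))
    · exact Finset.mem_coe.mpr (Finset.mem_image_of_mem σ (Finset.mem_coe.mp hyC))
    · rw [hends x (Finset.mem_coe.mp hxC)]; exact hwx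
    · rw [hends y (Finset.mem_coe.mp hyC)]; exact hwy
  · intro v hv
    have hnodes : G₂.nodesOf (C.image σ) = G.nodesOf C := by
      ext x
      simp only [G₂.mem_nodesOf, G.mem_nodesOf, Finset.mem_image]
      constructor
      · rintro ⟨e', ⟨e, heC, rfl⟩, hx⟩
        exact ⟨e, heC, by rwa [hends e heC] at hx⟩
      · rintro ⟨e, heC, hx⟩
        exact ⟨σ e, ⟨e, heC, rfl⟩, by rwa [hends e heC]⟩
    have hfilter : (C.image σ).filter (fun e' => v ∈ G₂.ends e')
        = (C.filter (fun e => v ∈ G₂.ends (σ e))).image σ := Finset.filter_image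
    have hdeg2 : G₂.degreeIn (C.image σ) v = G.degreeIn C v := by
      rw [degreeIn, hfilter, Finset.card_image_of_injOn
        (hinj.mono (by intro x hx; exact Finset.mem_coe.mpr (Finset.mem_of_mem_filter x (Finset.mem_coe.mp hx))))]
      rw [degreeIn]
      congr 1
      refine Finset.filter_congr fun e heC => ?_
      rw [hends e heC]
    rw [hdeg2]
    exact hdeg v (by rwa [hnodes] at hv)

end MGraph

/-! ## Statement 13 -/

/-- In the orthographic construction with `Ehat` equal to all of
`Ê(Δ, ê₀)∖{ê₀}`, the biased graph `Ω₀(Ehat)` is a biased expansion of `Δ`, the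
projection sending each edge `ê` to the edge of `Δ` whose edge line contains it. -/
theorem stmt13 {P N E' : Type*} [Fintype N] [Nonempty N] (G : ProjGeom P)
    (P' : Set P) (hP' : G.IsHyperplane P')
    (Δ : MGraph N E') (hΔ : Δ.IsSimple)
    (z' : E' → P) (hz'mem : ∀ f : E', z' f ∈ P')
    (hz'inj : Function.Injective z')
    (hz'rep : ∀ S : Finset E', Δ.graphicRk (↑S : Set E') = G.rank (z' '' ↑S))
    (e₀ : P) (he₀ : e₀ ∉ P')
    (Ehat : Set P) (hEhat : Ehat = (⋃ f : E', G.line (z' f) e₀) \ {e₀})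
    (hE : ∀ x ∈ Ehat, ∃ f : E', x ∈ G.line (z' f) e₀) :
    IsBiasedExpansion (G.orthoGraph Δ z' e₀ Ehat hE) (G.orthoBal Δ z' e₀ Ehat hE)
      Δ (G.orthoProj z' e₀ Ehat hE) := by
  have hz'ne : ∀ f : E', z' f ≠ e₀ := fun f h => he₀ (h ▸ hz'mem f)
  have hline_ne : ∀ f g : E', f ≠ g → G.line (z' f) e₀ ≠ G.line (z' g) e₀ := by
    intro f g hfg hEq
    have h1 : z' g ∈ G.line (z' f) e₀ := hEq ▸ G.left_mem_line (z' g) e₀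
    have h2 : G.line (z' f) (z' g) = G.line (z' f) e₀ :=
      G.line_unique (z' f) e₀ (z' f) (z' g) (hz'ne f) (G.left_mem_line _ _) h1
        (fun h => hfg (hz'inj h))
    have h3 : e₀ ∈ G.line (z' f) (z' g) := by rw [h2]; exact G.right_mem_line _ _
    exact he₀ (hP'.1 (z' f) (hz'mem f) (z' g) (hz'mem g) h3)
  have huniq : ∀ (x : P), x ≠ e₀ → ∀ f g : E',
      x ∈ G.line (z' f) e₀ → x ∈ G.line (z' g) e₀ → f = g := by
    intro x hx f g hxf hxg
    by_contra hfg
    apply hline_ne f g hfg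
    have h1 : G.line x e₀ = G.line (z' f) e₀ :=
      G.line_unique (z' f) e₀ x e₀ (hz'ne f) hxf (G.right_mem_line _ _) hx
    have h2 : G.line x e₀ = G.line (z' g) e₀ :=
      G.line_unique (z' g) e₀ x e₀ (hz'ne g) hxg (G.right_mem_line _ _) hx
    rw [← h1, h2]
  have hproj : ∀ x : ↥Ehat, (x : P) ∈ G.line (z' (G.orthoProj z' e₀ Ehat hE x)) e₀ :=
    fun x => (hE x x.2).choose_spec
  have hEsub : ∀ q ∈ Ehat, q ≠ e₀ := by
    rw [hEhat]; exact fun q hq => hq.2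
  have hxne : ∀ x : ↥Ehat, (x : P) ≠ e₀ := fun x => hEsub _ x.2
  have hproj_eq : ∀ (x : ↥Ehat) (f : E'), (x : P) ∈ G.line (z' f) e₀ →
      G.orthoProj z' e₀ Ehat hE x = f :=
    fun x f hx => huniq x (hxne x) _ f (hproj x) hx
  refine ⟨?_, fun e => rfl, ?_⟩
  · intro f
    have hmem : z' f ∈ Ehat := by
      rw [hEhat]
      exact ⟨Set.mem_iUnion.mpr ⟨f, G.left_mem_line _ _⟩, hz'ne f⟩
    exact ⟨⟨z' f, hmem⟩, hproj_eq _ f (G.left_mem_line _ _)⟩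
  intro C hC f₀ hf₀ s hs
  set p := G.orthoProj z' e₀ Ehat hE with hpdef
  set D := C.erase f₀ with hDdef
  -- rank facts
  have hnodes_pos : 0 < (Δ.nodesOf C).card := by
    obtain ⟨e, heC⟩ := hC.1
    have h2 : (Δ.ends e).card = 2 := hC.2.1 e heC
    obtain ⟨v, hv⟩ := Finset.card_pos.mp (show 0 < (Δ.ends e).card by omega)
    exact Finset.card_pos.mpr ⟨v, Δ.mem_nodesOf.mpr ⟨e, heC, hv⟩⟩
  have hnN : (Δ.nodesOf C).card ≤ Fintype.card N := by
    rw [← Finset.card_univ]; exact Finset.card_le_univ _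
  have hcardC : C.card = (Δ.nodesOf C).card := (Δ.circle_nodes_card hC).symm
  have hcompC : Δ.numComponents ↑C = Fintype.card N - (Δ.nodesOf C).card + 1 :=
    Δ.numComponents_char ↑C (Δ.nodesOf C) (Finset.card_pos.mp hnodes_pos)
      (Δ.circle_conn_char hC)
  have hrkC : Δ.graphicRk (↑C : Set E') = C.card - 1 := by
    rw [MGraph.graphicRk, hcompC]; omega
  have hrkE : ∀ g ∈ C, Δ.graphicRk (↑(C.erase g) : Set E') = C.card - 1 := by
    intro g hg
    rw [MGraph.graphicRk,
      Δ.numComponents_char _ (Δ.nodesOf C) (Finset.card_pos.mp hnodes_pos)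
        (Δ.conn_erase_char hC hg)]
    omega
  have hindep : ∀ g ∈ C, G.Indep (z' '' ↑(C.erase g)) := by
    intro g hg
    have h1 : G.rank (z' '' ↑(C.erase g)) = (C.erase g).card := by
      rw [← hz'rep, hrkE g hg, Finset.card_erase_of_mem hg]
    have h2 : z' '' ↑(C.erase g) = ↑((C.erase g).image z') := (Finset.coe_image).symm
    rw [h2] at h1 ⊢
    exact G.indep_of_rank_eq_card
      (by rw [h1, Finset.card_image_of_injective _ hz'inj])
  have hdep : ∃ x ∈ C.image z', x ∈ G.span ((↑(C.image z') : Set P) \ {x}) := by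
    refine G.rank_lt_card_dep ?_
    rw [Finset.card_image_of_injective _ hz'inj, Finset.coe_image, ← hz'rep, hrkC]
    have hcpos : 0 < C.card := Finset.card_pos.mpr hC.1
    omega
  have hspan_f₀ : z' f₀ ∈ G.span (z' '' ↑D) := by
    obtain ⟨x, hxC, hxdep⟩ := hdep
    obtain ⟨g, hgC, rfl⟩ := Finset.mem_image.mp hxC
    have himg : (↑(C.image z') : Set P) \ {z' g} = z' '' ↑(C.erase g) := by
      rw [Finset.coe_image, Finset.coe_erase, Set.image_diff hz'inj, Set.image_singleton]
    rw [himg] at hxdep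
    by_cases hgf : g = f₀
    · rw [hDdef, ← hgf]; exact hxdep
    · set A₀ := z' '' (↑C \ {g, f₀} : Set E') with hA₀
      have hsetg : (↑C \ {g} : Set E') = insert f₀ (↑C \ ({g, f₀} : Set E')) := by
        ext x
        simp only [Set.mem_insert_iff, Set.mem_diff, Set.mem_singleton_iff, Finset.mem_coe]
        constructor
        · rintro ⟨hxc, hxg⟩
          by_cases hxf : x = f₀
          · exact Or.inl hxf
          · exact Or.inr ⟨hxc, not_or.mpr ⟨hxg, hxf⟩⟩
        · rintro (rfl | ⟨hxc, hx⟩)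
          · exact ⟨hf₀, fun h => hgf h.symm⟩
          · exact ⟨hxc, (not_or.mp hx).1⟩
      have hsetf : (↑C \ {f₀} : Set E') = insert g (↑C \ ({g, f₀} : Set E')) := by
        ext x
        simp only [Set.mem_insert_iff, Set.mem_diff, Set.mem_singleton_iff, Finset.mem_coe]
        constructor
        · rintro ⟨hxc, hxf⟩
          by_cases hxg : x = g
          · exact Or.inl hxg
          · exact Or.inr ⟨hxc, not_or.mpr ⟨hxg, hxf⟩⟩
        · rintro (rfl | ⟨hxc, hx⟩)
          · exact ⟨hgC, hgf⟩
          · exact ⟨hxc, (not_or.mp hx).2⟩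
      have hCg : z' '' ↑(C.erase g) = insert (z' f₀) A₀ := by
        rw [Finset.coe_erase, hsetg, Set.image_insert_eq, hA₀]
      have hCf : z' '' ↑(C.erase f₀) = insert (z' g) A₀ := by
        rw [Finset.coe_erase, hsetf, Set.image_insert_eq, hA₀]
      have hA₀subg : A₀ ⊆ z' '' ↑(C.erase g) \ {z' f₀} := by
        rintro x ⟨h, ⟨hhc, hh⟩, rfl⟩
        simp only [Set.mem_insert_iff, Set.mem_singleton_iff, not_or] at hh
        refine ⟨⟨h, by rw [Finset.coe_erase]; exact ⟨hhc, hh.1⟩, rfl⟩, ?_⟩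
        simp only [Set.mem_singleton_iff]
        exact fun hEq => hh.2 (hz'inj hEq)
      have hA₀subf : A₀ ⊆ z' '' ↑(C.erase f₀) \ {z' g} := by
        rintro x ⟨h, ⟨hhc, hh⟩, rfl⟩
        simp only [Set.mem_insert_iff, Set.mem_singleton_iff, not_or] at hh
        refine ⟨⟨h, by rw [Finset.coe_erase]; exact ⟨hhc, hh.2⟩, rfl⟩, ?_⟩
        simp only [Set.mem_singleton_iff]
        exact fun hEq => hh.1 (hz'inj hEq)
      have hf₀A₀ : z' f₀ ∉ G.span A₀ := by
        intro hmem
        refine hindep g hgC (z' f₀) ⟨f₀, ?_, rfl⟩ (G.span_mono hA₀subg hmem)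
        rw [Finset.coe_erase]; exact ⟨hf₀, fun h => hgf (h.symm)⟩
      have hgA₀ : z' g ∉ G.span A₀ := by
        intro hmem
        refine hindep f₀ hf₀ (z' g) ⟨g, ?_, rfl⟩ (G.span_mono hA₀subf hmem)
        rw [Finset.coe_erase]; exact ⟨hgC, hgf⟩
      rw [hCg] at hxdep
      have hfin := G.exchange hf₀A₀ hxdep hgA₀
      rw [← hCf] at hfin
      exact hfin
  have hWind : G.Indep (z' '' ↑D) := hindep f₀ hf₀
  have hWP' : G.span (z' '' ↑D) ⊆ P' :=
    G.span_le hP'.1 (by rintro x ⟨f, hf, rfl⟩; exact hz'mem f)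
  have he₀W : e₀ ∉ G.span (z' '' ↑D) := fun h => he₀ (hWP' h)
  have hWe₀ind : G.Indep (insert e₀ (z' '' ↑D)) := G.indep_insert hWind he₀W
  -- the lifting induction
  have hlift : ∀ D' : Finset E', D' ⊆ D →
      G.Indep (insert e₀ (z' '' ↑D')) →
      G.Indep (insert e₀ ((fun f => ((s f : P))) '' ↑D')) ∧
        G.span (insert e₀ ((fun f => ((s f : P))) '' ↑D'))
          = G.span (insert e₀ (z' '' ↑D')) := by
    intro D'
    induction D' using Finset.induction_on with
    | empty => exact fun _ h => ⟨by simpa using h, by simp⟩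
    | @insert f D' hfD' ih =>
        intro hsub hind
        have hfD : f ∈ D := hsub (Finset.mem_insert_self f D')
        have hDsub : D' ⊆ D := (Finset.subset_insert f D').trans hsub
        have hins : z' '' ↑(insert f D') = insert (z' f) (z' '' ↑D') := by
          rw [Finset.coe_insert, Set.image_insert_eq]
        have hins' : (fun f => ((s f : P))) '' ↑(insert f D')
            = insert ((s f : P)) ((fun f => ((s f : P))) '' ↑D') := by
          rw [Finset.coe_insert, Set.image_insert_eq]
        have hindD' : G.Indep (insert e₀ (z' '' ↑D')) := by
          refine G.indep_mono ?_ hind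
          rw [hins, Set.insert_comm]
          exact Set.subset_insert _ _
        obtain ⟨ih1, ih2⟩ := ih hDsub hindD'
        have hzf_not : z' f ∉ G.span (insert e₀ (z' '' ↑D')) := by
          intro hmem
          refine hind (z' f) ?_ (G.span_mono ?_ hmem)
          · rw [hins, Set.insert_comm]; exact Set.mem_insert _ _
          · intro x hx
            rcases Set.mem_insert_iff.mp hx with rfl | ⟨h, hhD, rfl⟩
            · exact ⟨Set.mem_insert _ _, by simp [Ne.symm (hz'ne f)]⟩
            · refine ⟨?_, ?_⟩
              · rw [hins]
                exact Set.mem_insert_iff.mpr (Or.inr (Set.mem_insert_iff.mpr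
                  (Or.inr ⟨h, hhD, rfl⟩)))
              · simp only [Set.mem_singleton_iff]
                intro hEq
                exact hfD' (by rwa [hz'inj hEq] at hhD)
        have hsf_line : (s f : P) ∈ G.line (z' f) e₀ := by
          have h1 := hproj (s f)
          rw [hs f hfD] at h1
          exact h1
        have hsf_ne : (s f : P) ≠ e₀ := hxne (s f)
        have hsf_not : (s f : P) ∉ G.span (insert e₀ (z' '' ↑D')) := by
          intro hmem
          apply hzf_not
          by_cases hzeq : (s f : P) = z' f
          · exact hzeq ▸ hmem
          · have h1 : G.line ((s f : P)) e₀ = G.line (z' f) e₀ :=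
              G.line_unique (z' f) e₀ (s f) e₀ (hz'ne f) hsf_line
                (G.right_mem_line _ _) hsf_ne
            have h2 : z' f ∈ G.line ((s f : P)) e₀ := by
              rw [h1]; exact G.left_mem_line _ _
            exact G.line_subset_span hmem
              (G.subset_span _ (Set.mem_insert _ _)) h2
        have hsf_notX : (s f : P) ∉ G.span (insert e₀ ((fun f => ((s f : P))) '' ↑D')) := by
          rw [ih2]; exact hsf_not
        constructor
        · rw [hins', Set.insert_comm]
          exact G.indep_insert ih1 hsf_notX
        · rw [hins, hins', Set.insert_comm e₀ ((s f : P)) _,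
            Set.insert_comm e₀ (z' f) _]
          apply subset_antisymm
          · refine G.span_le (G.isFlat_span _) ?_
            intro x hx
            rcases Set.mem_insert_iff.mp hx with rfl | hx2
            · -- s f ∈ span (insert (z' f) (insert e₀ ...))
              refine G.line_subset_span (A := insert (z' f) (insert e₀ (z' '' ↑D')))
                (G.subset_span _ (Set.mem_insert _ _))
                (G.subset_span _ (Set.mem_insert_iff.mpr (Or.inr (Set.mem_insert _ _)))) hsf_line
            · have : x ∈ G.span (insert e₀ ((fun f => ((s f : P))) '' ↑D')) :=
                G.subset_span _ hx2
              rw [ih2] at this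
              exact G.span_mono (Set.subset_insert _ _) this
          · refine G.span_le (G.isFlat_span _) ?_
            intro x hx
            rcases Set.mem_insert_iff.mp hx with rfl | hx2
            · have h2 : z' f ∈ G.line ((s f : P)) e₀ := by
                by_cases hzeq : (s f : P) = z' f
                · rw [hzeq]; exact G.left_mem_line _ _
                · rw [G.line_unique (z' f) e₀ (s f) e₀ (hz'ne f) hsf_line
                    (G.right_mem_line _ _) hsf_ne]
                  exact G.left_mem_line _ _
              exact G.line_subset_span
                (G.subset_span _ (Set.mem_insert _ _))
                (G.subset_span _ (Set.mem_insert_iff.mpr (Or.inr (Set.mem_insert _ _)))) h2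
            · have : x ∈ G.span (insert e₀ (z' '' ↑D')) := G.subset_span _ hx2
              rw [← ih2] at this
              exact G.span_mono (Set.subset_insert _ _) this
  obtain ⟨hXind, hXspan⟩ := hlift D subset_rfl hWe₀ind
  set X := (fun f => ((s f : P))) '' ↑D with hXdef
  have he₀nX : e₀ ∉ X := by
    rintro ⟨f, hf, hEq⟩
    exact hxne (s f) hEq
  have he₀X : e₀ ∉ G.span X := by
    intro h
    refine hXind e₀ (Set.mem_insert _ _) ?_
    have hEq : insert e₀ X \ {e₀} = X := by
      rw [Set.insert_diff_of_mem _ (Set.mem_singleton e₀),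
        Set.diff_singleton_eq_self he₀nX]
    rw [hEq]
    exact h
  have hzf₀span : z' f₀ ∈ G.span (insert e₀ X) := by
    rw [hXspan]
    exact G.span_mono (Set.subset_insert _ _) hspan_f₀
  rw [G.span_insert_eq he₀X] at hzf₀span
  rcases Set.mem_insert_iff.mp hzf₀span with heq | ⟨a, haX, haline⟩
  · exact absurd (heq ▸ hz'mem f₀) he₀
  have hane₀ : a ≠ e₀ := fun h => he₀X (h ▸ haX)
  have haL : a ∈ G.line (z' f₀) e₀ := by
    by_cases haz : a = z' f₀
    · rw [haz]; exact G.left_mem_line _ _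
    · rw [G.line_unique a e₀ (z' f₀) e₀ hane₀ haline (G.right_mem_line _ _)
        (hz'ne f₀)]
      exact G.left_mem_line _ _
  have haE : a ∈ Ehat := by
    rw [hEhat]; exact ⟨Set.mem_iUnion.mpr ⟨f₀, haL⟩, hane₀⟩
  have hpt : p ⟨a, haE⟩ = f₀ := hproj_eq ⟨a, haE⟩ f₀ haL
  refine ⟨⟨a, haE⟩, ⟨hpt, ?_, ?_⟩, ?_⟩
  · -- the lifted edge set is a circle
    set σ : E' → ↥Ehat := fun f => if f = f₀ then ⟨a, haE⟩ else s f with hσ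
    have hσD : ∀ f ∈ D, σ f = s f := fun f hf => if_neg (Finset.ne_of_mem_erase hf)
    have hσf₀ : σ f₀ = ⟨a, haE⟩ := if_pos rfl
    have hpσ : ∀ f ∈ C, p (σ f) = f := by
      intro f hf
      by_cases hff : f = f₀
      · rw [hff, hσf₀, hpt]
      · rw [hσ]
        simp only [if_neg hff]
        exact hs f (Finset.mem_erase.mpr ⟨hff, hf⟩)
    have hends_σ : ∀ f ∈ C, (G.orthoGraph Δ z' e₀ Ehat hE).ends (σ f) = Δ.ends f := by
      intro f hf
      show Δ.ends (p (σ f)) = Δ.ends f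
      rw [hpσ f hf]
    have hσinj : Set.InjOn σ ↑C := by
      intro x hx y hy hxy
      have h2 := congrArg p hxy
      rw [hpσ x (Finset.mem_coe.mp hx), hpσ y (Finset.mem_coe.mp hy)] at h2
      exact h2
    have hcircle := Δ.isCircle_map (G.orthoGraph Δ z' e₀ Ehat hE) σ hσinj hends_σ hC
    convert hcircle using 2
    ext x
    simp only [Finset.mem_union, Finset.mem_image, Finset.mem_singleton]
    constructor
    · rintro (⟨f, hfD, rfl⟩ | rfl)
      · exact ⟨f, Finset.mem_of_mem_erase hfD, hσD f hfD⟩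
      · exact ⟨f₀, hf₀, hσf₀⟩
    · rintro ⟨f, hfC, rfl⟩
      by_cases hff : f = f₀
      · subst hff
        exact Or.inr hσf₀
      · exact Or.inl ⟨f, Finset.mem_erase.mpr ⟨hff, hfC⟩, (hσD f
          (Finset.mem_erase.mpr ⟨hff, hfC⟩)).symm⟩
  · -- cross-flat condition
    have hspanins : G.span (insert a X) = G.span X := by
      apply subset_antisymm
      · exact G.span_le (G.isFlat_span _) (Set.insert_subset haX (G.subset_span X))
      · exact G.span_mono (Set.subset_insert _ _)
    have hfinal : e₀ ∉ G.span (insert a X) := by rw [hspanins]; exact he₀X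
    convert hfinal using 3
    ext q
    simp only [Set.mem_image, Finset.mem_coe, Finset.mem_union, Finset.mem_image,
      Finset.mem_singleton, Set.mem_insert_iff]
    constructor
    · rintro ⟨x, hx, rfl⟩
      rcases hx with ⟨f, hfD, rfl⟩ | rfl
      · exact Or.inr ⟨f, hfD, rfl⟩
      · exact Or.inl rfl
    · rintro (hq | ⟨f, hfD, rfl⟩)
      · exact ⟨⟨a, haE⟩, Or.inr rfl, hq.symm⟩
      · exact ⟨s f, Or.inl ⟨f, hfD, rfl⟩, rfl⟩
  · -- uniqueness
    rintro y ⟨hpy, hybal⟩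
    have hyL : (y : P) ∈ G.line (z' f₀) e₀ := by
      have h1 := hproj y
      rw [hpy] at h1
      exact h1
    by_cases hya : (y : P) = a
    · exact Subtype.ext hya
    exfalso
    obtain ⟨-, hyspan⟩ := hybal
    apply hyspan
    have h1 : G.line ((y : P)) a = G.line (z' f₀) e₀ :=
      G.line_unique (z' f₀) e₀ (y : P) a (hz'ne f₀) hyL haL hya
    have he₀line : e₀ ∈ G.line ((y : P)) a := by
      rw [h1]; exact G.right_mem_line _ _
    have hproof : e₀ ∈ G.span (insert ((y : P)) X) :=
      G.line_subset_span (A := insert ((y : P)) X)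
        (G.subset_span _ (Set.mem_insert _ _))
        (G.span_mono (Set.subset_insert _ _) haX) he₀line
    convert hproof using 3
    ext q
    simp only [Set.mem_image, Finset.mem_coe, Finset.mem_union, Finset.mem_image,
      Finset.mem_singleton, Set.mem_insert_iff]
    constructor
    · rintro ⟨x, hx, rfl⟩
      rcases hx with ⟨f, hfD, rfl⟩ | rfl
      · exact Or.inr ⟨f, hfD, rfl⟩
      · exact Or.inl rfl
    · rintro (hq | ⟨f, hfD, rfl⟩)
      · exact ⟨y, Or.inr rfl, hq.symm⟩
      · exact ⟨s f, Or.inl ⟨f, hfD, rfl⟩, rfl⟩
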